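/- Let g be a finite-dimensional nilpotent real Lie algebra of dimension at least 4 with symplectic form θ, let ∇ be the symplectic affine structure on g, let g̃ = g ⊕ ℝ be the one-dimensional central extension, and let ∇̃ be a bilinear map on g̃ satisfying conditions (*) for some bilinear φ : g × g → ℝ with φ(X,Y) − φ(Y,X) = θ(X,Y). If ∇̃ is an affine structure on the Lie algebra g̃, then π(∇̃((X,0),(0,λ))) = 0 for all X ∈ g and λ ∈ ℝ; that is, the covariant derivative of any central element against any element of g stays central. -/

import Mathlib

/-- (General case.)  Let `g` be nilpotent of dimension ≥ 4 with symplectic form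
`θ` and symplectic affine structure `∇`, and `∇̃` a bilinear map on the central extension
`g̃ = g ⊕ ℝ` satisfying conditions (*) for some bilinear `φ` with `φ(X,Y) − φ(Y,X) = θ(X,Y)`.
If `∇̃` is an affine structure on `g̃`, then `π(∇̃((X,0),(0,λ))) = 0` for all `X ∈ g`, `λ ∈ ℝ`. -/
theorem general_case_V_eq_zero
    (L : Type*) [LieRing L] [LieAlgebra ℝ L] [FiniteDimensional ℝ L]
    [LieRing.IsNilpotent L]
    (hdim : 4 ≤ Module.finrank ℝ L)
    (θ : L →ₗ[ℝ] L →ₗ[ℝ] ℝ)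
    (halt : ∀ X : L, θ X X = 0)
    (hnondeg : ∀ X : L, (∀ Y : L, θ X Y = 0) → X = 0)
    (hcocycle : ∀ X Y Z : L, θ ⁅X, Y⁆ Z + θ ⁅Y, Z⁆ X + θ ⁅Z, X⁆ Y = 0)
    (D : L →ₗ[ℝ] L →ₗ[ℝ] L)
    (hD : ∀ X Y Z : L, θ (D X Y) Z = -θ Y ⁅X, Z⁆)
    (φ : L →ₗ[ℝ] L →ₗ[ℝ] ℝ)
    (hφ : ∀ X Y : L, φ X Y - φ Y X = θ X Y)
    (Dt : (L × ℝ) →ₗ[ℝ] (L × ℝ) →ₗ[ℝ] (L × ℝ))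
    (hstar1 : ∀ X Y : L, Dt (X, (0 : ℝ)) (Y, (0 : ℝ)) = (D X Y, φ X Y))
    (hstar2 : ∀ (X : L) (lam : ℝ), Dt (X, (0 : ℝ)) ((0 : L), lam) = Dt ((0 : L), lam) (X, (0 : ℝ)))
    (htorsion : ∀ U V : L × ℝ, Dt U V - Dt V U = (⁅U.1, V.1⁆, θ U.1 V.1))
    (hflat : ∀ U V W : L × ℝ,
      Dt U (Dt V W) - Dt V (Dt U W) = Dt (⁅U.1, V.1⁆, θ U.1 V.1) W) :
    ∀ (X : L) (lam : ℝ), (Dt (X, (0 : ℝ)) ((0 : L), lam)).1 = 0 := by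
  -- antisymmetry of θ
  have hskew : ∀ X Y : L, θ Y X = - θ X Y := by
    intro X Y
    have h := halt (X + Y)
    simp only [map_add, LinearMap.add_apply, halt] at h
    linarith
  -- flatness of D
  have hDflat : ∀ X Y Z : L, D X (D Y Z) - D Y (D X Z) = D ⁅X, Y⁆ Z := by
    intro X Y Z
    have key : ∀ W : L, θ (D X (D Y Z) - D Y (D X Z) - D ⁅X, Y⁆ Z) W = 0 := by
      intro W
      have e1 : θ (D X (D Y Z)) W = θ Z ⁅Y, ⁅X, W⁆⁆ := by
        rw [hD, hD, neg_neg]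
      have e2 : θ (D Y (D X Z)) W = θ Z ⁅X, ⁅Y, W⁆⁆ := by
        rw [hD, hD, neg_neg]
      have e3 : θ (D ⁅X, Y⁆ Z) W = - θ Z ⁅⁅X, Y⁆, W⁆ := hD _ _ _
      have e4 : (⁅⁅X, Y⁆, W⁆ : L) = ⁅X, ⁅Y, W⁆⁆ - ⁅Y, ⁅X, W⁆⁆ := lie_lie X Y W
      simp only [map_sub, LinearMap.sub_apply, e1, e2, e3, e4]
      ring
    have h0 := hnondeg _ key
    linear_combination (norm := module) h0
  have hsplit2 : ∀ (P : L) (q : ℝ), ((P, q) : L × ℝ) = (P, (0:ℝ)) + q • ((0:L), (1:ℝ)) := by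
    intro P q
    ext <;> simp
  -- key identity (*)
  have star : ∀ X Y Z : L,
      φ Y Z • (Dt (X, (0:ℝ)) ((0:L), (1:ℝ))).1 - φ X Z • (Dt (Y, (0:ℝ)) ((0:L), (1:ℝ))).1
        = θ X Y • (Dt (Z, (0:ℝ)) ((0:L), (1:ℝ))).1 := by
    intro X Y Z
    have h := hflat (X, (0:ℝ)) (Y, (0:ℝ)) (Z, (0:ℝ))
    simp only [hstar1] at h
    rw [hsplit2 (D Y Z) (φ Y Z), hsplit2 (D X Z) (φ X Z), hsplit2 ⁅X, Y⁆ (θ X Y)] at h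
    simp only [map_add, map_smul, LinearMap.add_apply, LinearMap.smul_apply, hstar1] at h
    rw [← hstar2 Z (1:ℝ)] at h
    have h1 := congrArg Prod.fst h
    simp only [Prod.fst_sub, Prod.fst_add, Prod.smul_fst] at h1
    have hf := hDflat X Y Z
    linear_combination (norm := module) h1 - hf
  -- main claim: V = 0
  have hVall : ∀ Z : L, (Dt (Z, (0:ℝ)) ((0:L), (1:ℝ))).1 = 0 := by
    by_cases hdiag : ∀ Z : L, φ Z Z = 0
    · intro Z
      by_contra hVZ
      have hZ0 : Z = 0 := by
        apply hnondeg
        intro Y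
        have hs := star Y Z Z
        rw [hdiag Z] at hs
        have hpol : φ Y Z + φ Z Y = 0 := by
          have h := hdiag (Y + Z)
          simp only [map_add, LinearMap.add_apply, hdiag] at h
          linarith
        have hθ : θ Y Z = 2 * φ Y Z := by
          have := hφ Y Z; linarith
        have hzero : ((3:ℝ) * φ Y Z) • (Dt (Z, (0:ℝ)) ((0:L), (1:ℝ))).1 = 0 := by
          have hc : (3:ℝ) * φ Y Z = θ Y Z + φ Y Z := by linarith
          rw [hc, add_smul, ← hs]
          module
        rcases smul_eq_zero.mp hzero with h | h
        · have hφ0 : φ Y Z = 0 := by linarith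
          rw [hskew Y Z, hθ, hφ0]
          ring
        · exact absurd h hVZ
      rw [hZ0] at hVZ
      apply hVZ
      have : ((0:L), (0:ℝ)) = (0 : L × ℝ) := rfl
      rw [this]
      simp
    · push_neg at hdiag
      obtain ⟨Z1, hZ1⟩ := hdiag
      by_cases hv : (Dt (Z1, (0:ℝ)) ((0:L), (1:ℝ))).1 = 0
      · intro X
        have hs := star X Z1 Z1
        rw [hv] at hs
        simp only [smul_zero, sub_zero] at hs
        rcases smul_eq_zero.mp hs with h | h
        · exact absurd h hZ1
        · exact h
      · exfalso
        have hrank1 : ∀ X : L, (Dt (X, (0:ℝ)) ((0:L), (1:ℝ))).1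
            = ((θ X Z1 + φ X Z1) / φ Z1 Z1) • (Dt (Z1, (0:ℝ)) ((0:L), (1:ℝ))).1 := by
          intro X
          have hs := star X Z1 Z1
          have h2 : φ Z1 Z1 • (Dt (X, (0:ℝ)) ((0:L), (1:ℝ))).1
              = (θ X Z1 + φ X Z1) • (Dt (Z1, (0:ℝ)) ((0:L), (1:ℝ))).1 := by
            rw [add_smul]
            linear_combination (norm := module) hs
          have h3 : (Dt (X, (0:ℝ)) ((0:L), (1:ℝ))).1
              = (φ Z1 Z1)⁻¹ • ((θ X Z1 + φ X Z1) • (Dt (Z1, (0:ℝ)) ((0:L), (1:ℝ))).1) := by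
            rw [← h2, smul_smul, inv_mul_cancel₀ hZ1, one_smul]
          rw [h3, smul_smul, div_eq_inv_mul]
        have hscal : ∀ X Y Z : L,
            φ Y Z * ((θ X Z1 + φ X Z1) / φ Z1 Z1) - φ X Z * ((θ Y Z1 + φ Y Z1) / φ Z1 Z1)
              = θ X Y * ((θ Z Z1 + φ Z Z1) / φ Z1 Z1) := by
          intro X Y Z
          have hs := star X Y Z
          rw [hrank1 X, hrank1 Y, hrank1 Z] at hs
          have hz : (φ Y Z * ((θ X Z1 + φ X Z1) / φ Z1 Z1)
              - φ X Z * ((θ Y Z1 + φ Y Z1) / φ Z1 Z1)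
              - θ X Y * ((θ Z Z1 + φ Z Z1) / φ Z1 Z1))
                • (Dt (Z1, (0:ℝ)) ((0:L), (1:ℝ))).1 = 0 := by
            rw [sub_smul, sub_smul, mul_smul, mul_smul, mul_smul]
            linear_combination (norm := module) hs
          rcases smul_eq_zero.mp hz with h | h
          · linarith
          · exact absurd h hv
        have hl1 : (θ Z1 Z1 + φ Z1 Z1) / φ Z1 Z1 = 1 := by
          rw [halt Z1, zero_add, div_self hZ1]
        -- find nonzero X with θ X Z1 = 0 and φ X Z1 = 0
        set F : L →ₗ[ℝ] ℝ × ℝ := (θ.flip Z1).prod (φ.flip Z1) with hF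
        have hnotinj : ¬ Function.Injective F := by
          intro hinj
          have := LinearMap.finrank_le_finrank_of_injective hinj
          simp at this
          omega
        rw [Function.not_injective_iff] at hnotinj
        obtain ⟨a, b, hab, hne⟩ := hnotinj
        set X := a - b with hX
        have hFX : F X = 0 := by
          rw [hX, map_sub, hab, sub_self]
        have hθX : θ X Z1 = 0 := congrArg Prod.fst hFX
        have hφX : φ X Z1 = 0 := congrArg Prod.snd hFX
        have hXne : X ≠ 0 := sub_ne_zero.mpr hne
        apply hXne
        apply hnondeg
        intro Y
        have h := hscal X Y Z1
        rw [hl1, hθX, hφX] at h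
        simp at h
        linarith [h]
  intro X lam
  have hsplit : ((0:L), lam) = lam • ((0:L), (1:ℝ)) := by ext <;> simp
  rw [hsplit, map_smul]
  simp only [Prod.smul_fst, hVall X, smul_zero]
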